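/- Let A = {a_n}, B = {b_n} be two sequences of positive integers with a_n ≤ b_n for all n, ψ: ℕ → (0,1) a positive function, and s ∈ (0,1]. Define S_{A,B}(ψ) = { x ∈ [0,1] : max{‖a_n x‖, ‖b_n x‖} < ψ(n) for infinitely many n ∈ ℕ }. If Σ_{n=1}^∞ (gcd(a_n,b_n) + b_n ψ(n)) · (ψ(n)/b_n)^s < ∞, then the s-dimensional Hausdorff measure of S_{A,B}(ψ) is zero. -/

import Mathlib

open MeasureTheory Filter Set
open scoped ENNReal Topology

/-- Distance from a real number to the nearest integer. -/
noncomputable def nint (x : ℝ) : ℝ := |x - (round x : ℝ)|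

lemma nint_le (x : ℝ) (p : ℤ) : nint x ≤ |x - p| := round_le x p

set_option maxHeartbeats 1000000 in
lemma count_lemma (a b : ℕ) (ha : 0 < a) (hb : 0 < b)
    (ψ : ℝ) (hψ0 : 0 < ψ) :
    ((((Finset.range (b+1)).filter
        (fun q : ℕ => nint ((a : ℝ) * q / b) < 2 * ψ)).card : ℝ))
      ≤ 4 * ((Nat.gcd a b : ℝ) + b * ψ) := by
  set d : ℕ := Nat.gcd a b with hd
  have hd0 : 0 < d := Nat.gcd_pos_of_pos_left _ ha
  have hdvda : d ∣ a := Nat.gcd_dvd_left a b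
  have hdvdb : d ∣ b := Nat.gcd_dvd_right a b
  set b' : ℕ := b / d with hb'
  have hbd : b = d * b' := (Nat.mul_div_cancel' hdvdb).symm
  have hb'0 : 0 < b' := Nat.div_pos (Nat.le_of_dvd hb hdvdb) hd0
  set K : Finset ℕ := (Finset.range (b+1)).filter
      (fun q : ℕ => nint ((a : ℝ) * q / b) < 2 * ψ) with hK
  set K' : Finset ℕ := K.erase b with hK'
  have hKcard : K.card ≤ K'.card + 1 := by
    by_cases hbK : b ∈ K
    · rw [hK', Finset.card_erase_add_one hbK]
    · rw [hK', Finset.erase_eq_of_notMem hbK]; omega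
  set g : ℕ → ℤ := fun q => ((a : ℤ) * q - round ((a : ℝ) * q / b) * b) / d with hg
  set M : ℤ := (⌊2 * ψ * b / d⌋₊ : ℤ) + 1 with hM
  have hM0 : 0 < M := by positivity
  have hnum : ∀ q : ℕ, (d : ℤ) ∣ ((a : ℤ) * q - round ((a : ℝ) * q / b) * b) := by
    intro q
    exact dvd_sub (Dvd.dvd.mul_right (Int.natCast_dvd_natCast.2 hdvda) _)
      (Dvd.dvd.mul_left (Int.natCast_dvd_natCast.2 hdvdb) _)
  have hgnum : ∀ q : ℕ, (d : ℤ) * g q = (a : ℤ) * q - round ((a : ℝ) * q / b) * b := by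
    intro q
    rw [hg]
    exact Int.mul_ediv_cancel' (hnum q)
  have habs : ∀ q ∈ K', ((|(a : ℤ) * q - round ((a : ℝ) * q / b) * b| : ℤ) : ℝ) < 2 * ψ * b := by
    intro q hq
    have hqK : q ∈ K := Finset.mem_of_mem_erase hq
    have hcond : nint ((a : ℝ) * q / b) < 2 * ψ := (Finset.mem_filter.1 hqK).2
    have hbR : (0:ℝ) < (b:ℝ) := by exact_mod_cast hb
    have h1 : |(a : ℝ) * q / b - round ((a : ℝ) * q / b)| < 2 * ψ := hcond
    have h2 := mul_lt_mul_of_pos_right h1 hbR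
    have h3 : |(a : ℝ) * q - round ((a : ℝ) * q / b) * b| < 2 * ψ * b := by
      calc |(a : ℝ) * q - round ((a : ℝ) * q / b) * b|
          = |((a : ℝ) * q / b - round ((a : ℝ) * q / b)) * b| := by
            rw [sub_mul, div_mul_cancel₀ _ hbR.ne']
        _ = |(a : ℝ) * q / b - round ((a : ℝ) * q / b)| * b := by
            rw [abs_mul, abs_of_pos hbR]
        _ < 2 * ψ * b := h2
    calc ((|(a : ℤ) * q - round ((a : ℝ) * q / b) * b| : ℤ) : ℝ)
        = |(a : ℝ) * q - round ((a : ℝ) * q / b) * b| := by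
          rw [Int.cast_abs]; push_cast; ring_nf
      _ < 2 * ψ * b := h3
  have hmaps : ∀ q ∈ K', g q ∈ Finset.Ioo (-M) M := by
    intro q hq
    have h2 := habs q hq
    have hEq : (d : ℤ) * |g q| = |(a : ℤ) * q - round ((a : ℝ) * q / b) * b| := by
      rw [← Int.abs_natCast d, ← abs_mul, hgnum q]
    have hgd : ((|g q| : ℤ) : ℝ) * d < 2 * ψ * b := by
      rw [← hEq] at h2
      push_cast at h2 ⊢
      linarith
    have hdR : (0:ℝ) < (d:ℝ) := by exact_mod_cast hd0
    have h4 : ((|g q| : ℤ) : ℝ) < 2 * ψ * b / d := by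
      rw [lt_div_iff₀ hdR]; exact hgd
    have h5 : ((|g q| : ℤ) : ℝ) < (M : ℝ) := by
      refine h4.trans_le ?_
      rw [hM]
      push_cast
      have := Nat.lt_floor_add_one (2 * ψ * (b:ℝ) / d)
      linarith
    have h6 : |g q| < M := by exact_mod_cast h5
    simpa [Finset.mem_Ioo] using abs_lt.1 h6
  have hfiber : ∀ t ∈ Finset.Ioo (-M) M, ((K'.filter (fun q => g q = t)).card ≤ d) := by
    intro t _
    refine le_trans (Finset.card_le_card_of_injOn (fun q => q / b') ?_ ?_)
      (le_of_eq (Finset.card_range d))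
    · intro q hq
      have hq' : q ∈ K' := Finset.mem_of_mem_filter _ hq
      have hqb : q < b := by
        have h1 := Finset.mem_erase.1 hq'
        have h2 := Finset.mem_range.1 (Finset.mem_of_mem_filter _ h1.2)
        omega
      have : q / b' < d := (Nat.div_lt_iff_lt_mul hb'0).2 (by omega)
      simpa [Finset.mem_range] using this
    · intro q1 hq1 q2 hq2 hdiv
      simp only [Finset.coe_filter, Set.mem_setOf_eq] at hq1 hq2
      have heq : (a : ℤ) * q1 - round ((a : ℝ) * q1 / b) * b
          = (a : ℤ) * q2 - round ((a : ℝ) * q2 / b) * b := by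
        rw [← hgnum q1, ← hgnum q2, hq1.2, hq2.2]
      have ha' : a = d * (a / d) := (Nat.mul_div_cancel' hdvda).symm
      have hkey : (a : ℤ) * ((q1 : ℤ) - q2) =
          ((round ((a : ℝ) * q1 / b) - round ((a : ℝ) * q2 / b)) : ℤ) * b := by
        linear_combination heq
      have hkey2 : ((a / d : ℕ) : ℤ) * ((q1 : ℤ) - q2) =
          ((round ((a : ℝ) * q1 / b) - round ((a : ℝ) * q2 / b)) : ℤ) * b' := by
        have hdZ : ((d : ℤ)) ≠ 0 := by exact_mod_cast hd0.ne'
        apply mul_left_cancel₀ hdZ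
        calc (d : ℤ) * (((a / d : ℕ) : ℤ) * ((q1 : ℤ) - q2))
            = (a : ℤ) * ((q1 : ℤ) - q2) := by
              rw [← mul_assoc]; congr 1; exact_mod_cast ha'.symm
          _ = ((round ((a : ℝ) * q1 / b) - round ((a : ℝ) * q2 / b)) : ℤ) * b := hkey
          _ = (d:ℤ) * (((round ((a : ℝ) * q1 / b) - round ((a : ℝ) * q2 / b)) : ℤ) * b') := by
              rw [hbd]; push_cast; ring
      have hcop : IsCoprime ((b' : ℤ)) ((a / d : ℕ) : ℤ) := by
        rw [Nat.isCoprime_iff_coprime]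
        exact (Nat.coprime_div_gcd_div_gcd hd0).symm
      have hdvd : ((b' : ℤ)) ∣ ((q1 : ℤ) - q2) := by
        apply hcop.dvd_of_dvd_mul_left
        exact ⟨round ((a : ℝ) * q1 / b) - round ((a : ℝ) * q2 / b), by linear_combination hkey2⟩
      have hmod : q1 % b' = q2 % b' := by
        have h7 : q1 ≡ q2 [MOD b'] := (Nat.modEq_iff_dvd (n := b')).2 (by
          simpa using (dvd_neg.2 hdvd))
        simpa [Nat.ModEq] using h7
      have hdiv' : q1 / b' = q2 / b' := hdiv
      have e1 := Nat.div_add_mod q1 b'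
      have e2 := Nat.div_add_mod q2 b'
      rw [hdiv', hmod] at e1
      exact e1.symm.trans e2
  have hcard' : K'.card ≤ d * (Finset.Ioo (-M) M).card :=
    Finset.card_le_mul_card_image_of_maps_to hmaps d hfiber
  have hIoo : ((Finset.Ioo (-M) M).card : ℝ) = 2 * (M:ℝ) - 1 := by
    rw [Int.card_Ioo]
    have h4 : (((M - -M - 1).toNat : ℤ)) = 2 * M - 1 := by
      rw [Int.toNat_of_nonneg (by omega)]; ring
    exact_mod_cast h4
  have hMle : (M : ℝ) ≤ 2 * ψ * b / d + 1 := by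
    rw [hM]
    push_cast
    have := Nat.floor_le (by positivity : (0:ℝ) ≤ 2 * ψ * (b:ℝ) / d)
    linarith
  have hdR : (0:ℝ) < (d:ℝ) := by exact_mod_cast hd0
  have hd1 : (1:ℝ) ≤ (d:ℝ) := by exact_mod_cast hd0
  have hbR : (0:ℝ) < (b:ℝ) := by exact_mod_cast hb
  have hfin : (K'.card : ℝ) ≤ 4 * ψ * b + d := by
    calc (K'.card : ℝ) ≤ (d : ℝ) * ((Finset.Ioo (-M) M).card : ℝ) := by exact_mod_cast hcard'
      _ = (d : ℝ) * (2 * (M:ℝ) - 1) := by rw [hIoo]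
      _ ≤ (d : ℝ) * (2 * (2 * ψ * b / d + 1) - 1) := by
          apply mul_le_mul_of_nonneg_left _ hdR.le
          linarith
      _ = 4 * ψ * b + d := by field_simp; ring
  have : (K.card : ℝ) ≤ (K'.card : ℝ) + 1 := by exact_mod_cast hKcard
  nlinarith [mul_pos hbR hψ0]

set_option maxHeartbeats 2000000 in
theorem stmt14 (a b : ℕ → ℕ) (ha : ∀ n, 0 < a n) (hb : ∀ n, 0 < b n)
    (hab : ∀ n, a n ≤ b n)
    (ψ : ℕ → ℝ) (hψ : ∀ n, ψ n ∈ Ioo (0 : ℝ) 1)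
    (s : ℝ) (hs0 : 0 < s) (hs1 : s ≤ 1)
    (hsum : Summable (fun n =>
      ((Nat.gcd (a n) (b n) : ℝ) + (b n : ℝ) * ψ n) * (ψ n / (b n : ℝ)) ^ s)) :
    μH[s] {x : ℝ | x ∈ Icc (0 : ℝ) 1 ∧
        ∃ᶠ n in atTop, max (nint ((a n : ℝ) * x)) (nint ((b n : ℝ) * x)) < ψ n} = 0 := by
  have hbR : ∀ n, (0:ℝ) < (b n : ℝ) := fun n => by exact_mod_cast hb n
  have hψ0 : ∀ n, 0 < ψ n := fun n => (hψ n).1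
  set C : ℕ → ℝ := fun n =>
    ((Nat.gcd (a n) (b n) : ℝ) + (b n : ℝ) * ψ n) * (ψ n / (b n : ℝ)) ^ s with hC
  have hgcd1 : ∀ n, (1:ℝ) ≤ (Nat.gcd (a n) (b n) : ℝ) := fun n => by
    exact_mod_cast Nat.gcd_pos_of_pos_left _ (ha n)
  have hGnn : ∀ n, 0 ≤ (ψ n / (b n : ℝ)) ^ s := fun n =>
    Real.rpow_nonneg (div_pos (hψ0 n) (hbR n)).le s
  have hC1 : ∀ n, (ψ n / (b n : ℝ)) ^ s ≤ C n := by
    intro n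
    have h1 : (1:ℝ) ≤ (Nat.gcd (a n) (b n) : ℝ) + (b n : ℝ) * ψ n := by
      nlinarith [hgcd1 n, mul_pos (hbR n) (hψ0 n)]
    exact le_mul_of_one_le_left (hGnn n) h1
  have hCnn : ∀ n, 0 ≤ C n := fun n => le_trans (hGnn n) (hC1 n)
  set F : ℕ → ℝ≥0∞ := fun n => ENNReal.ofReal (8 * C n) with hF
  have hFsum : ∑' n, F n ≠ ∞ := by
    rw [hF, ← ENNReal.ofReal_tsum_of_nonneg (fun n => by nlinarith [hCnn n])
      (hsum.mul_left 8)]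
    exact ENNReal.ofReal_ne_top
  set L : ℕ → ℝ≥0∞ := fun n => ∑' k, F (k + n) with hL
  have hLtend : Tendsto L atTop (𝓝 0) := ENNReal.tendsto_sum_nat_add F hFsum
  have hFL : ∀ {n m : ℕ}, n ≤ m → F m ≤ L n := by
    intro n m h
    have h2 : F ((m - n) + n) ≤ ∑' k, F (k + n) := ENNReal.le_tsum _
    rwa [Nat.sub_add_cancel h] at h2
  -- covering data
  set K : ℕ → Finset ℕ := fun m => (Finset.range (b m + 1)).filter
    (fun q : ℕ => nint ((a m : ℝ) * q / b m) < 2 * ψ m) with hK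
  set t : ℕ → ℕ × ℕ → Set ℝ := fun n i =>
    if n ≤ i.1 ∧ i.2 ∈ K i.1 then
      Icc ((i.2 : ℝ) / b i.1 - ψ i.1 / b i.1) ((i.2 : ℝ) / b i.1 + ψ i.1 / b i.1)
    else ∅ with ht_def
  set D : ℕ → ℝ≥0∞ := fun m => ENNReal.ofReal (2 * (ψ m / b m)) with hD
  have hdiam : ∀ n m q, n ≤ m → q ∈ K m → EMetric.diam (t n (m, q)) = D m := by
    intro n m q h1 h2
    simp only [ht_def, if_pos (And.intro h1 h2)]
    rw [EMetric.diam, Real.ediam_Icc, hD]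
    congr 1
    ring
  have hdiam0 : ∀ n m q, ¬(n ≤ m ∧ q ∈ K m) → EMetric.diam (t n (m, q)) = 0 := by
    intro n m q h
    simp only [ht_def, if_neg h, EMetric.diam, Metric.ediam_empty]
  -- diameter control
  set r : ℕ → ℝ≥0∞ := fun n => 2 * (L n) ^ (1/s) with hr_def
  have hDF : ∀ {n m : ℕ}, n ≤ m → D m ≤ r n := by
    intro n m hnm
    have h1 : ENNReal.ofReal ((ψ m / b m) ^ s) ≤ F m := by
      apply ENNReal.ofReal_le_ofReal
      nlinarith [hC1 m, hCnn m]
    have h2 : ENNReal.ofReal ((ψ m / b m) ^ s) ≤ L n := h1.trans (hFL hnm)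
    have h3 : ENNReal.ofReal (ψ m / b m) ≤ (L n) ^ (1/s) := by
      have e1 : ENNReal.ofReal (ψ m / b m)
          = (ENNReal.ofReal ((ψ m / b m) ^ s)) ^ (1/s) := by
        rw [ENNReal.ofReal_rpow_of_nonneg (hGnn m) (by positivity),
          ← Real.rpow_mul (div_pos (hψ0 m) (hbR m)).le]
        rw [mul_one_div, div_self hs0.ne', Real.rpow_one]
      rw [e1]
      exact ENNReal.rpow_le_rpow h2 (by positivity)
    calc D m = 2 * ENNReal.ofReal (ψ m / b m) := by
          simp only [hD]
          rw [ENNReal.ofReal_mul (by norm_num : (0:ℝ) ≤ 2)]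
          norm_num
      _ ≤ 2 * (L n) ^ (1/s) := mul_le_mul_right h3 2
  have ht : ∀ n, ∀ i : ℕ × ℕ, EMetric.diam (t n i) ≤ r n := by
    intro n ⟨m, q⟩
    by_cases h : n ≤ m ∧ q ∈ K m
    · rw [hdiam n m q h.1 h.2]; exact hDF h.1
    · rw [hdiam0 n m q h]; exact zero_le
  have hr : Tendsto r atTop (𝓝 0) := by
    rw [hr_def]
    have h1 : Tendsto (fun n => (L n) ^ (1/s)) atTop (𝓝 0) := by
      rw [ENNReal.tendsto_nhds_zero]
      intro ε hε
      filter_upwards [ENNReal.tendsto_nhds_zero.1 hLtend (ε ^ s)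
        (ENNReal.rpow_pos_of_nonneg hε hs0.le)] with n hn
      rw [one_div]; exact (ENNReal.rpow_inv_le_iff hs0).2 hn
    have h2 := ENNReal.Tendsto.const_mul h1 (Or.inr (by norm_num : (2:ℝ≥0∞) ≠ ⊤))
    simpa using h2
  -- the covering property
  have hst : ∀ n : ℕ, {x : ℝ | x ∈ Icc (0 : ℝ) 1 ∧
      ∃ᶠ k in atTop, max (nint ((a k : ℝ) * x)) (nint ((b k : ℝ) * x)) < ψ k}
      ⊆ ⋃ i : ℕ × ℕ, t n i := by
    intro n x hx
    obtain ⟨hx01, hfreq⟩ := hx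
    obtain ⟨m, hnm, hm⟩ := (frequently_atTop.1 hfreq) n
    obtain ⟨hx0, hx1⟩ := hx01
    have hbx0 : (0:ℝ) ≤ (b m : ℝ) * x := mul_nonneg (hbR m).le hx0
    have hbx1 : (b m : ℝ) * x ≤ b m := by nlinarith [hbR m]
    have hrnn : 0 ≤ round ((b m : ℝ) * x) := by
      rw [round_eq]
      exact Int.floor_nonneg.2 (by linarith)
    have hrle : round ((b m : ℝ) * x) ≤ (b m : ℤ) := by
      rw [round_eq]
      have h9 : ((b m : ℝ) * x + 1/2) ≤ (b m : ℝ) + 1/2 := by linarith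
      calc ⌊(b m : ℝ) * x + 1/2⌋ ≤ ⌊(b m : ℝ) + 1/2⌋ := Int.floor_le_floor h9
        _ = (b m : ℤ) := by
          rw [add_comm, Int.floor_add_natCast]
          norm_num
    set q : ℕ := (round ((b m : ℝ) * x)).toNat with hq
    have hqcast : (q : ℝ) = round ((b m : ℝ) * x) := by
      rw [hq]
      exact_mod_cast Int.toNat_of_nonneg hrnn
    have hqb : q ≤ b m := by
      rw [hq]; omega
    have hbxq : |(b m : ℝ) * x - q| < ψ m := by
      rw [hqcast]
      exact lt_of_le_of_lt (le_max_right _ _) hm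
    have haxp : |(a m : ℝ) * x - round ((a m : ℝ) * x)| < ψ m :=
      lt_of_le_of_lt (le_max_left _ _) hm
    have hqK : q ∈ K m := by
      rw [hK]
      refine Finset.mem_filter.2 ⟨Finset.mem_range.2 (by omega), ?_⟩
      refine lt_of_le_of_lt (nint_le _ (round ((a m : ℝ) * x))) ?_
      have e1 : (a m : ℝ) * q / b m - round ((a m : ℝ) * x)
          = ((a m : ℝ) / b m) * ((q : ℝ) - (b m : ℝ) * x)
            + ((a m : ℝ) * x - round ((a m : ℝ) * x)) := by
        field_simp [(hbR m).ne']
        ring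
      have hab1 : (a m : ℝ) / b m ≤ 1 := by
        rw [div_le_one (hbR m)]
        exact_mod_cast hab m
      have hab0 : (0:ℝ) ≤ (a m : ℝ) / b m := by positivity
      rw [e1]
      calc |(a m : ℝ) / b m * ((q : ℝ) - (b m : ℝ) * x)
            + ((a m : ℝ) * x - round ((a m : ℝ) * x))|
          ≤ |(a m : ℝ) / b m * ((q : ℝ) - (b m : ℝ) * x)|
            + |(a m : ℝ) * x - round ((a m : ℝ) * x)| := abs_add_le _ _
        _ = (a m : ℝ) / b m * |(q : ℝ) - (b m : ℝ) * x|
            + |(a m : ℝ) * x - round ((a m : ℝ) * x)| := by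
            rw [abs_mul, abs_of_nonneg hab0]
        _ < 2 * ψ m := by
            have h10 : |(q : ℝ) - (b m : ℝ) * x| < ψ m := by
              rw [abs_sub_comm]; exact hbxq
            nlinarith [abs_nonneg ((q : ℝ) - (b m : ℝ) * x),
              mul_nonneg (sub_nonneg.2 hab1) (abs_nonneg ((q : ℝ) - (b m : ℝ) * x))]
    refine mem_iUnion.2 ⟨(m, q), ?_⟩
    have htmq : t n (m, q) = Icc ((q : ℝ) / b m - ψ m / b m) ((q : ℝ) / b m + ψ m / b m) := by
      simp only [ht_def]
      exact if_pos ⟨hnm, hqK⟩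
    rw [htmq, Set.mem_Icc]
    obtain ⟨hA, hB⟩ := abs_lt.1 hbxq
    constructor
    · rw [div_sub_div_same, div_le_iff₀ (hbR m)]
      linarith [mul_comm x ((b m : ℝ))]
    · rw [← add_div, le_div_iff₀ (hbR m)]
      linarith [mul_comm x ((b m : ℝ))]
  -- cost estimate
  have hcore : ∀ m, ((K m).card : ℝ≥0∞) * (D m) ^ s ≤ F m := by
    intro m
    have hcount : ((K m).card : ℝ)
        ≤ 4 * ((Nat.gcd (a m) (b m) : ℝ) + (b m : ℝ) * ψ m) := by
      rw [hK]
      exact count_lemma (a m) (b m) (ha m) (hb m) (ψ m) (hψ0 m)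
    have h2s : (2:ℝ) ^ s ≤ 2 := by
      calc (2:ℝ) ^ s ≤ (2:ℝ) ^ (1:ℝ) :=
            Real.rpow_le_rpow_of_exponent_le one_le_two hs1
        _ = 2 := Real.rpow_one 2
    have hDs : (D m) ^ s = ENNReal.ofReal ((2 * (ψ m / b m)) ^ s) := by
      simp only [hD]
      rw [ENNReal.ofReal_rpow_of_nonneg
        (mul_nonneg (by norm_num) (div_pos (hψ0 m) (hbR m)).le) hs0.le]
    have hreal : ((K m).card : ℝ) * (2 * (ψ m / b m)) ^ s ≤ 8 * C m := by
      have e2 : (2 * (ψ m / b m)) ^ s = 2 ^ s * (ψ m / b m) ^ s :=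
        Real.mul_rpow (by norm_num) (div_pos (hψ0 m) (hbR m)).le
      have hA1 : (1:ℝ) ≤ (Nat.gcd (a m) (b m) : ℝ) + (b m : ℝ) * ψ m := by
        nlinarith [hgcd1 m, mul_pos (hbR m) (hψ0 m)]
      have h2snn : (0:ℝ) ≤ (2:ℝ) ^ s := Real.rpow_nonneg (by norm_num) s
      rw [e2, hC]
      calc ((K m).card : ℝ) * ((2:ℝ) ^ s * (ψ m / b m) ^ s)
          ≤ (4 * ((Nat.gcd (a m) (b m) : ℝ) + (b m : ℝ) * ψ m))
            * ((2:ℝ) ^ s * (ψ m / b m) ^ s) := by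
            exact mul_le_mul_of_nonneg_right hcount (mul_nonneg h2snn (hGnn m))
        _ ≤ (4 * ((Nat.gcd (a m) (b m) : ℝ) + (b m : ℝ) * ψ m))
            * (2 * (ψ m / b m) ^ s) := by
            apply mul_le_mul_of_nonneg_left _ (by nlinarith)
            exact mul_le_mul_of_nonneg_right h2s (hGnn m)
        _ = 8 * (((Nat.gcd (a m) (b m) : ℝ) + (b m : ℝ) * ψ m)
            * (ψ m / (b m : ℝ)) ^ s) := by ring
    calc ((K m).card : ℝ≥0∞) * (D m) ^ s
        = ENNReal.ofReal (((K m).card : ℝ) * (2 * (ψ m / b m)) ^ s) := by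
          rw [hDs, ENNReal.ofReal_mul (Nat.cast_nonneg _),
            ENNReal.ofReal_natCast]
      _ ≤ ENNReal.ofReal (8 * C m) := ENNReal.ofReal_le_ofReal hreal
      _ = F m := by rw [hF]
  -- total cost bound
  have hbound : ∀ n, (∑' i : ℕ × ℕ, EMetric.diam (t n i) ^ s) ≤ L n := by
    intro n
    rw [ENNReal.tsum_prod']
    have hinner : ∀ m, (∑' q : ℕ, EMetric.diam (t n (m, q)) ^ s)
        ≤ (if n ≤ m then F m else 0) := by
      intro m
      by_cases hnm : n ≤ m
      · rw [if_pos hnm]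
        have e3 : (∑' q : ℕ, EMetric.diam (t n (m, q)) ^ s)
            = ∑ q ∈ K m, EMetric.diam (t n (m, q)) ^ s := by
          apply tsum_eq_sum
          intro q hq
          rw [hdiam0 n m q (fun h => hq h.2), ENNReal.zero_rpow_of_pos hs0]
        rw [e3, Finset.sum_congr rfl (fun q hq => by rw [hdiam n m q hnm hq]),
          Finset.sum_const, nsmul_eq_mul]
        exact hcore m
      · rw [if_neg hnm]
        have hz : ∀ q : ℕ, EMetric.diam (t n (m, q)) ^ s = 0 := fun q => by
          rw [hdiam0 n m q (fun h => hnm h.1), ENNReal.zero_rpow_of_pos hs0]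
        simp [hz]
    calc (∑' m : ℕ, ∑' q : ℕ, EMetric.diam (t n (m, q)) ^ s)
        ≤ ∑' m : ℕ, (if n ≤ m then F m else 0) := ENNReal.tsum_le_tsum hinner
      _ = ∑' m : {m : ℕ | n ≤ m}, F ↑m := by
          have e5 : (fun m : ℕ => if n ≤ m then F m else 0)
              = Set.indicator {m : ℕ | n ≤ m} F := by
            funext m
            by_cases h : n ≤ m <;> simp [Set.indicator, h]
          rw [e5, ← tsum_subtype]
      _ = L n := by
          rw [hL]
          exact (Equiv.tsum_eq (⟨fun k => ⟨k + n, Nat.le_add_left n k⟩,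
            fun m => m.1 - n, fun k => by simp,
            fun m => Subtype.ext (Nat.sub_add_cancel m.2)⟩ :
            ℕ ≃ {m : ℕ | n ≤ m}) (fun m : {m : ℕ | n ≤ m} => F ↑m)).symm
  -- conclusion
  refine le_antisymm ?_ zero_le
  calc μH[s] {x : ℝ | x ∈ Icc (0 : ℝ) 1 ∧
        ∃ᶠ k in atTop, max (nint ((a k : ℝ) * x)) (nint ((b k : ℝ) * x)) < ψ k}
      ≤ liminf (fun n => ∑' i : ℕ × ℕ, EMetric.diam (t n i) ^ s) atTop :=
        MeasureTheory.Measure.hausdorffMeasure_le_liminf_tsum s _ r hr t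
          (Eventually.of_forall ht) (Eventually.of_forall hst)
    _ ≤ liminf L atTop := liminf_le_liminf (Eventually.of_forall hbound)
    _ = 0 := hLtend.liminf_eq
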